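/- Let σ > 0, μ ∈ ℝ, δ > 0, Δ = √(μ² + 2δσ²), and W_δ(x) = (2/Δ) e^{−μx/σ²} sinh(xΔ/σ²). Then the function x ↦ W_δ(x)/W_δ'(x) is strictly increasing on [0, ∞); equivalently W_δ'(x)² > W_δ(x) W_δ''(x) for all x ≥ 0. -/

import Mathlib

open Real Set

/-- W_δ/W_δ' is strictly increasing on [0,∞); equivalently (W')² > W·W''. -/
theorem bm_scale_ratio_strictMono (μ σ δ : ℝ) (hσ : 0 < σ) (hδ : 0 < δ) :
    let Δ := Real.sqrt (μ ^ 2 + 2 * δ * σ ^ 2)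
    let W : ℝ → ℝ := fun x => (2 / Δ) * Real.exp (-(μ * x) / σ ^ 2) * Real.sinh (x * Δ / σ ^ 2)
    StrictMonoOn (fun x => W x / deriv W x) (Set.Ici (0 : ℝ)) ∧
      ∀ x : ℝ, 0 ≤ x → W x * deriv (deriv W) x < (deriv W x) ^ 2 := by
  intro Δ W
  have hσ2 : (0:ℝ) < σ ^ 2 := by positivity
  have hΔ : 0 < Δ := Real.sqrt_pos.mpr (by positivity)
  set C : ℝ := 2 / Δ with hC
  set a : ℝ := -μ / σ ^ 2 with ha
  set b : ℝ := Δ / σ ^ 2 with hb0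
  have hCpos : 0 < C := by positivity
  have hbpos : 0 < b := by positivity
  have hmu : |μ| < Δ := by
    rw [show Δ = Real.sqrt (μ ^ 2 + 2 * δ * σ ^ 2) from rfl, ← Real.sqrt_sq_eq_abs]
    exact Real.sqrt_lt_sqrt (sq_nonneg μ) (by nlinarith)
  have hab : |a| < b := by
    rw [ha, hb0, abs_div, abs_neg, abs_of_pos hσ2]
    exact div_lt_div_of_pos_right hmu hσ2
  -- W rewritten
  have hWeq : W = fun x => C * (Real.exp (a * x) * Real.sinh (b * x)) := by
    funext x
    show (2 / Δ) * Real.exp (-(μ * x) / σ ^ 2) * Real.sinh (x * Δ / σ ^ 2) = _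
    rw [show a * x = -(μ * x) / σ ^ 2 by rw [ha]; ring,
        show b * x = x * Δ / σ ^ 2 by rw [hb0]; ring]
    ring
  have hlin : ∀ (c x : ℝ), HasDerivAt (fun y => c * y) c x := fun c x => by
    simpa using (hasDerivAt_id x).const_mul c
  -- first derivative
  set F : ℝ → ℝ := fun x => C * (Real.exp (a * x) * (a * Real.sinh (b * x) + b * Real.cosh (b * x))) with hF
  set G : ℝ → ℝ := fun x => C * (Real.exp (a * x) *
      ((a ^ 2 + b ^ 2) * Real.sinh (b * x) + 2 * a * b * Real.cosh (b * x))) with hG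
  have hWd : ∀ x, HasDerivAt W (F x) x := by
    intro x
    have h1 := (((hlin a x).exp.mul ((hlin b x).sinh)).const_mul C)
    rw [hWeq]
    refine h1.congr_deriv ?_
    simp only [hF]; ring
  have hderivW : deriv W = F := funext fun x => (hWd x).deriv
  have hFd : ∀ x, HasDerivAt F (G x) x := by
    intro x
    have h1 := (((hlin a x).exp.mul
        (((hlin b x).sinh.const_mul a).add ((hlin b x).cosh.const_mul b))).const_mul C)
    refine h1.congr_deriv ?_
    simp only [hG, Pi.add_apply]; ring
  have hderivF : deriv F = G := funext fun x => (hFd x).deriv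
  -- positivity of F
  have hFpos : ∀ x, 0 < F x := by
    intro x
    have hcosh : |Real.sinh (b * x)| < Real.cosh (b * x) := by
      nlinarith [Real.cosh_pos (b * x), Real.cosh_sq (b * x), abs_nonneg (Real.sinh (b * x)),
        sq_abs (Real.sinh (b * x))]
    have h1 : |a| * |Real.sinh (b * x)| ≤ |a| * Real.cosh (b * x) :=
      mul_le_mul_of_nonneg_left hcosh.le (abs_nonneg a)
    have h2 : |a| * Real.cosh (b * x) < b * Real.cosh (b * x) :=
      mul_lt_mul_of_pos_right hab (Real.cosh_pos _)
    have h3 : -(|a| * |Real.sinh (b * x)|) ≤ a * Real.sinh (b * x) := by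
      rw [← abs_mul]; exact neg_abs_le _
    have h4 : 0 < a * Real.sinh (b * x) + b * Real.cosh (b * x) := by linarith
    rw [hF]
    have := Real.exp_pos (a * x)
    positivity
  -- key inequality
  have key : ∀ x, W x * G x < (F x) ^ 2 := by
    intro x
    have h := Real.cosh_sq (b * x)
    have heq : (F x) ^ 2 - W x * G x = (C * Real.exp (a * x) * b) ^ 2 := by
      rw [hWeq, hF, hG]
      simp only
      linear_combination ((C * Real.exp (a * x) * b) ^ 2) * h
    have hpos : 0 < (C * Real.exp (a * x) * b) ^ 2 := by
      have := Real.exp_pos (a * x); positivity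
    linarith
  constructor
  · -- strict monotonicity
    rw [hderivW]
    have hg : ∀ x, HasDerivAt (fun x => W x / F x)
        ((F x * F x - W x * G x) / (F x) ^ 2) x := fun x =>
      (hWd x).div (hFd x) (hFpos x).ne'
    have : StrictMono (fun x => W x / F x) := by
      apply strictMono_of_deriv_pos
      intro x
      rw [(hg x).deriv]
      apply div_pos _ (pow_pos (hFpos x) 2)
      have := key x
      nlinarith [key x]
    exact this.strictMonoOn _
  · intro x _
    rw [hderivW, hderivF]
    exact key x
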